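/- Let x, y ∈ P have a common upper bound in P with respect to ≤, and let z ∈ P be a least upper bound of x and y. If θ(x) = θ(y), then there exists t ∈ ℕ such that either z = x and x = y·b^t, or z = y and y = x·b^t. -/

import Mathlib

open scoped Classical

namespace BSpaper

/-- The single Baumslag–Solitar relator `a * b^c * (b^d * a)⁻¹` on two generators
(`true` plays the role of `a`, `false` the role of `b`). -/
def rels (c d : ℕ) : Set (FreeGroup Bool) :=
  {FreeGroup.of true * FreeGroup.of false ^ c * (FreeGroup.of false ^ d * FreeGroup.of true)⁻¹}

/-- The Baumslag–Solitar group `BS(c,d) = ⟨a, b ∣ a b^c = b^d a⟩`. -/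
abbrev Grp (c d : ℕ) := PresentedGroup (rels c d)

variable (c d : ℕ)

/-- The generator `a`. -/
def a : Grp c d := PresentedGroup.of true

/-- The generator `b`. -/
def b : Grp c d := PresentedGroup.of false

/-- The submonoid `P` of `BS(c,d)` generated by `a` and `b`. -/
def P : Submonoid (Grp c d) := Submonoid.closure {a c d, b c d}

/-- The word `b^{s₀} a b^{s₁} a ⋯ b^{s_{k-1}} a` associated to a list of digits `s_i < d`. -/
def wordStem : List (Fin d) → Grp c d
  | [] => 1
  | i :: l => b c d ^ (i : ℕ) * a c d * wordStem l

/-- `Σ_k`: the set of stems of height `k`. -/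
def SigmaSet (k : ℕ) : Set (Grp c d) :=
  {g | ∃ l : List (Fin d), l.length = k ∧ wordStem c d l = g}

/-- The data `(l, t)` of a normal-form decomposition `x = (b^{s₀} a ⋯ b^{s_{k-1}} a) * b^t`,
chosen by choice when it exists (it exists, uniquely, for every `x ∈ P`). -/
noncomputable def nf (x : Grp c d) : List (Fin d) × ℕ :=
  if h : ∃ p : List (Fin d) × ℕ, x = wordStem c d p.1 * b c d ^ p.2 then h.choose else ([], 0)

/-- The stem of `x`, i.e. the stem part of the normal form of `x`. -/
noncomputable def stem (x : Grp c d) : Grp c d := wordStem c d (nf c d x).1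

/-- The left-invariant partial order on `BS(c,d)`: `g ≤ h` iff `g⁻¹ * h ∈ P`. -/
def bsLe (g h : Grp c d) : Prop := g⁻¹ * h ∈ P c d

lemma a_mem_P : a c d ∈ P c d := Submonoid.subset_closure (Set.mem_insert _ _)

lemma b_mem_P : b c d ∈ P c d :=
  Submonoid.subset_closure (Set.mem_insert_of_mem _ rfl)

lemma wordStem_mem_P (l : List (Fin d)) : wordStem c d l ∈ P c d := by
  induction l with
  | nil => exact one_mem _
  | cons i l ih =>
      exact mul_mem (mul_mem (pow_mem (b_mem_P c d) _) (a_mem_P c d)) ih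


lemma bs_rel : a c d * b c d ^ c = b c d ^ d * a c d := by
  have h : PresentedGroup.mk (rels c d)
      (FreeGroup.of true * FreeGroup.of false ^ c *
        (FreeGroup.of false ^ d * FreeGroup.of true)⁻¹) = 1 :=
    (QuotientGroup.eq_one_iff _).2 (Subgroup.subset_normalClosure rfl)
  have h2 : a c d * b c d ^ c * (b c d ^ d * a c d)⁻¹ = 1 := by
    simpa [a, b, PresentedGroup.of, map_mul, map_pow, map_inv] using h
  rwa [mul_inv_eq_one] at h2

lemma bs_semiconj (n : ℤ) : a c d * (b c d) ^ ((c : ℤ) * n) = (b c d) ^ ((d : ℤ) * n) * a c d := by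
  have h : SemiconjBy (a c d) (b c d ^ (c : ℤ)) (b c d ^ (d : ℤ)) := by
    simpa [zpow_natCast, SemiconjBy] using (bs_rel c d)
  simpa [← zpow_natCast, ← zpow_mul, SemiconjBy] using h.zpow_right n

abbrev G₀ := Multiplicative ℤ

def pHom (n : ℕ) : G₀ →* G₀ :=
  AddMonoidHom.toMultiplicative (AddMonoidHom.mulLeft (n : ℤ))

lemma pHom_apply (n : ℕ) (m : ℤ) :
    pHom n (Multiplicative.ofAdd m) = Multiplicative.ofAdd ((n : ℤ) * m) := rfl

lemma pHom_inj {n : ℕ} (hn : 0 < n) : Function.Injective (pHom n) := by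
  intro x y h
  have h1 : (n : ℤ) * x.toAdd = (n : ℤ) * y.toAdd := congrArg Multiplicative.toAdd h
  exact Multiplicative.toAdd.injective
    (mul_left_cancel₀ (by exact_mod_cast hn.ne' : (n : ℤ) ≠ 0) h1)

lemma mem_pHom_range {n : ℕ} {g : G₀} :
    g ∈ (pHom n).range ↔ ∃ k : ℤ, (n : ℤ) * k = g.toAdd := by
  constructor
  · rintro ⟨m, rfl⟩; exact ⟨m.toAdd, rfl⟩
  · rintro ⟨k, hk⟩
    exact ⟨Multiplicative.ofAdd k, Multiplicative.toAdd.injective hk⟩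

noncomputable def eIso (n : ℕ) (hn : 0 < n) : G₀ ≃* (pHom n).range :=
  MonoidHom.ofInjective (pHom_inj hn)

lemma eIso_coe (n : ℕ) (hn : 0 < n) (m : G₀) : (eIso n hn m : G₀) = pHom n m := by
  simp [eIso, MonoidHom.ofInjective_apply]

variable (hc : 0 < c) (hd : 0 < d)

noncomputable def φiso : (pHom c).range ≃* (pHom d).range :=
  (eIso c hc).symm.trans (eIso d hd)

lemma φiso_apply (m : G₀) :
    (φiso c d hc hd (eIso c hc m) : G₀) = pHom d m := by
  simp [φiso, eIso_coe]

abbrev H := HNNExtension G₀ (pHom c).range (pHom d).range (φiso c d hc hd)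

noncomputable def β : H c d hc hd := HNNExtension.of (Multiplicative.ofAdd 1)

lemma β_zpow (n : ℤ) : (β c d hc hd) ^ n = HNNExtension.of (Multiplicative.ofAdd n) := by
  rw [β, ← map_zpow]; congr 1; simp [← ofAdd_zsmul]

lemma β_pow (n : ℕ) : (β c d hc hd) ^ n = HNNExtension.of (Multiplicative.ofAdd (n : ℤ)) := by
  rw [← zpow_natCast, β_zpow]

lemma hnn_rel : (HNNExtension.t : H c d hc hd) * (β c d hc hd) ^ (c : ℤ) =
    (β c d hc hd) ^ (d : ℤ) * HNNExtension.t := by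
  have h := HNNExtension.t_mul_of (φ := φiso c d hc hd) (eIso c hc (Multiplicative.ofAdd 1))
  rw [φiso_apply, eIso_coe] at h
  rw [β_zpow, β_zpow]
  simpa [pHom_apply] using h

/-- The homomorphism `Grp c d →* H`. -/
noncomputable def ψ : Grp c d →* H c d hc hd :=
  PresentedGroup.toGroup (f := fun x => bif x then HNNExtension.t else β c d hc hd)
    (by
      rintro r rfl
      simp only [map_mul, map_pow, map_inv, FreeGroup.lift_apply_of, cond_true, cond_false]
      rw [mul_inv_eq_one]
      have := hnn_rel c d hc hd
      rw [zpow_natCast, zpow_natCast] at this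
      exact this)

lemma ψ_a : ψ c d hc hd (a c d) = HNNExtension.t := by
  simp [ψ, a, PresentedGroup.toGroup.of]

lemma ψ_b : ψ c d hc hd (b c d) = β c d hc hd := by
  simp [ψ, b, PresentedGroup.toGroup.of]

/-- The homomorphism `H →* Grp c d`. -/
noncomputable def χ : H c d hc hd →* Grp c d :=
  HNNExtension.lift (zpowersHom (Grp c d) (b c d)) (a c d)
    (by
      rintro ⟨g, m, rfl⟩
      have h1 : ((⟨pHom c m, ⟨m, rfl⟩⟩ : (pHom c).range) : G₀) = pHom c m := rfl
      have h2 : φiso c d hc hd ⟨pHom c m, ⟨m, rfl⟩⟩ = eIso d hd m := by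
        have : (⟨pHom c m, ⟨m, rfl⟩⟩ : (pHom c).range) = eIso c hc m := by
          ext; rw [eIso_coe]
        rw [this]
        simp [φiso]
      rw [h2]
      show a c d * zpowersHom (Grp c d) (b c d) (pHom c m) = _
      have h3 : ((eIso d hd m : (pHom d).range) : G₀) = pHom d m := eIso_coe d hd m
      rw [h3]
      show a c d * (b c d) ^ (pHom c m).toAdd = (b c d) ^ (pHom d m).toAdd * a c d
      have : (pHom c m).toAdd = (c : ℤ) * m.toAdd := rfl
      rw [this]
      have : (pHom d m).toAdd = (d : ℤ) * m.toAdd := rfl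
      rw [this]
      exact bs_semiconj c d m.toAdd)

lemma ψ_inj : Function.Injective (ψ c d hc hd) := by
  have key : (χ c d hc hd).comp (ψ c d hc hd) = MonoidHom.id _ := by
    apply PresentedGroup.ext
    intro x
    cases x with
    | true =>
        simp only [MonoidHom.comp_apply, MonoidHom.id_apply]
        show χ c d hc hd (ψ c d hc hd (a c d)) = a c d
        rw [ψ_a]
        simp [χ, HNNExtension.lift_t]
    | false =>
        simp only [MonoidHom.comp_apply, MonoidHom.id_apply]
        show χ c d hc hd (ψ c d hc hd (b c d)) = b c d
        rw [ψ_b, β]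
        simp only [χ, HNNExtension.lift_of]
        show (b c d) ^ ((Multiplicative.ofAdd (1:ℤ)).toAdd) = b c d
        simp
  intro x y h
  have := congrArg (χ c d hc hd) h
  have hx := DFunLike.congr_fun key x
  have hy := DFunLike.congr_fun key y
  simp only [MonoidHom.comp_apply, MonoidHom.id_apply] at hx hy
  rw [← hx, ← hy, this]


/-- head and list data of the reduced word corresponding to `wordStem l * b ^ t`. -/
def rwData : List (Fin d) → ℕ → G₀ × List (ℤˣ × G₀)
  | [], t => (Multiplicative.ofAdd (t : ℤ), [])
  | s :: l, t => (Multiplicative.ofAdd ((s : ℕ) : ℤ), (1, (rwData l t).1) :: (rwData l t).2)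

lemma rwData_fst_one : ∀ (l : List (Fin d)) (t : ℕ) (p : ℤˣ × G₀),
    p ∈ (rwData d l t).2 → p.1 = 1 := by
  intro l
  induction l with
  | nil => intro t p hp; simp [rwData] at hp
  | cons s l ih =>
      intro t p hp
      rw [rwData, List.mem_cons] at hp
      rcases hp with rfl | hp
      · rfl
      · exact ih t p hp

lemma rwData_chain (l : List (Fin d)) (t : ℕ) :
    ((rwData d l t).2).Chain' (fun p q => p.1 = q.1) := by
  induction l with
  | nil => simp [rwData]; exact List.isChain_nil
  | cons s l ih =>
      rw [rwData]
      refine List.isChain_cons.2 ⟨?_, ih⟩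
      intro q hq
      have hq' : q ∈ (rwData d l t).2 := List.mem_of_mem_head? hq
      exact (rwData_fst_one d l t q hq').symm

lemma rwData_length (l : List (Fin d)) (t : ℕ) :
    (rwData d l t).2.length = l.length := by
  induction l with
  | nil => simp [rwData]
  | cons s l ih => simp [rwData, ih]

/-- The reduced word corresponding to `wordStem l * b ^ t`. -/
def redw (l : List (Fin d)) (t : ℕ) :
    HNNExtension.NormalWord.ReducedWord G₀ (pHom c).range (pHom d).range :=
  { head := (rwData d l t).1
    toList := (rwData d l t).2
    chain := by
      have h := rwData_chain d l t
      exact h.imp fun p q hpq =>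
        fun (_ : p.2 ∈ HNNExtension.toSubgroup (pHom c).range (pHom d).range p.1) => hpq }

lemma redw_prod (hc : 0 < c) (hd : 0 < d) (l : List (Fin d)) (t : ℕ) :
    (redw c d l t).prod (φiso c d hc hd) = ψ c d hc hd (wordStem c d l * b c d ^ t) := by
  induction l with
  | nil =>
      have h1 : (redw c d ([] : List (Fin d)) t).prod (φiso c d hc hd) =
          HNNExtension.of (Multiplicative.ofAdd (t : ℤ)) := by
        simp [redw, rwData, HNNExtension.NormalWord.ReducedWord.prod]
      rw [h1, map_mul, map_pow, ψ_b, β_pow]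
      simp [wordStem]
  | cons s l ih =>
      have hstep : (redw c d (s :: l) t).prod (φiso c d hc hd) =
          HNNExtension.of (Multiplicative.ofAdd ((s:ℕ) : ℤ)) *
          (HNNExtension.t *
            ((redw c d l t).prod (φiso c d hc hd))) := by
        simp [redw, rwData, HNNExtension.NormalWord.ReducedWord.prod, mul_assoc]
      have hws : wordStem c d (s :: l) * b c d ^ t
          = b c d ^ (s:ℕ) * (a c d * (wordStem c d l * b c d ^ t)) := by
        rw [wordStem]; group
      rw [hstep, ih, hws]
      simp only [map_mul, map_pow, ψ_a, ψ_b, β_pow, mul_assoc]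

lemma nf_unique (hc : 0 < c) (hd : 0 < d) (l l' : List (Fin d)) (t t' : ℕ)
    (h : wordStem c d l * b c d ^ t = wordStem c d l' * b c d ^ t') :
    l = l' ∧ t = t' := by
  induction l generalizing l' t t' with
  | nil =>
      cases l' with
      | cons s' l' =>
          exfalso
          have hp : (redw c d ([] : List (Fin d)) t).prod (φiso c d hc hd) =
              (redw c d (s' :: l') t').prod (φiso c d hc hd) := by
            rw [redw_prod, redw_prod, h]
          have hlen := congrArg List.length
            (HNNExtension.ReducedWord.map_fst_eq_and_of_prod_eq _ hp).1
          simp [redw, rwData_length, rwData] at hlen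
      | nil =>
          refine ⟨rfl, ?_⟩
          have h2 : ψ c d hc hd (b c d ^ t) = ψ c d hc hd (b c d ^ t') := by
            simpa [wordStem] using congrArg (ψ c d hc hd) h
          rw [map_pow, map_pow, ψ_b, β_pow, β_pow] at h2
          have h3 := HNNExtension.of_injective (φiso c d hc hd) h2
          have h4 : (t : ℤ) = (t' : ℤ) := by
            simpa using congrArg Multiplicative.toAdd h3
          exact_mod_cast h4
  | cons s l ih =>
      cases l' with
      | nil =>
          exfalso
          have hp : (redw c d (s :: l) t).prod (φiso c d hc hd) =
              (redw c d ([] : List (Fin d)) t').prod (φiso c d hc hd) := by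
            rw [redw_prod, redw_prod, h]
          have hlen := congrArg List.length
            (HNNExtension.ReducedWord.map_fst_eq_and_of_prod_eq _ hp).1
          simp [redw, rwData_length, rwData] at hlen
      | cons s' l' =>
          have hp : (redw c d (s :: l) t).prod (φiso c d hc hd) =
              (redw c d (s' :: l') t').prod (φiso c d hc hd) := by
            rw [redw_prod, redw_prod, h]
          have key := HNNExtension.ReducedWord.map_fst_eq_and_of_prod_eq _ hp
          have hmem : (Multiplicative.ofAdd ((s:ℕ) : ℤ))⁻¹ *
              Multiplicative.ofAdd ((s':ℕ) : ℤ) ∈ (pHom d).range := by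
            have h1 := key.2 1 (by simp [redw, rwData])
            simpa [redw, rwData] using h1
          have hss' : s = s' := by
            rw [mem_pHom_range] at hmem
            obtain ⟨k, hk⟩ := hmem
            have hk' : (d : ℤ) * k = -((s:ℕ) : ℤ) + ((s':ℕ) : ℤ) := by
              simpa using hk
            have hsz : ((s:ℕ) : ℤ) < (d : ℤ) := by exact_mod_cast s.isLt
            have hs'z : ((s':ℕ) : ℤ) < (d : ℤ) := by exact_mod_cast s'.isLt
            have hs0 : (0 : ℤ) ≤ ((s:ℕ) : ℤ) := by positivity
            have hs'0 : (0 : ℤ) ≤ ((s':ℕ) : ℤ) := by positivity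
            have hdpos : (0 : ℤ) < (d : ℤ) := by exact_mod_cast hd
            have h5 : (d : ℤ) * (-1) < (d : ℤ) * k := by rw [hk']; omega
            have h6 : (d : ℤ) * k < (d : ℤ) * 1 := by rw [hk']; omega
            have hk1 : k < 1 := (mul_lt_mul_iff_right₀ hdpos).1 h6
            have hk2 : (-1 : ℤ) < k := (mul_lt_mul_iff_right₀ hdpos).1 h5
            have hk0 : k = 0 := by omega
            rw [hk0, mul_zero] at hk'
            apply Fin.ext
            have : ((s:ℕ) : ℤ) = ((s':ℕ) : ℤ) := by omega
            exact_mod_cast this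
          subst hss'
          have e1 : b c d ^ (s:ℕ) * (a c d * (wordStem c d l * b c d ^ t)) =
              b c d ^ (s:ℕ) * (a c d * (wordStem c d l' * b c d ^ t')) := by
            have hl := h
            rw [wordStem, wordStem] at hl
            simpa [mul_assoc] using hl
          have h2 : wordStem c d l * b c d ^ t = wordStem c d l' * b c d ^ t' :=
            mul_left_cancel (mul_left_cancel e1)
          obtain ⟨h3, h4⟩ := ih l' t t' h2
          exact ⟨by rw [h3], h4⟩

lemma wordStem_append (l1 l2 : List (Fin d)) :
    wordStem c d (l1 ++ l2) = wordStem c d l1 * wordStem c d l2 := by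
  induction l1 with
  | nil => simp [wordStem]
  | cons i l1 ih => simp [wordStem, ih, mul_assoc]

lemma pow_d_mul_a (q : ℕ) :
    b c d ^ (d * q) * a c d = a c d * b c d ^ (c * q) := by
  induction q with
  | zero => simp
  | succ q ih =>
      have : d * (q + 1) = d + d * q := by ring
      rw [this, pow_add, mul_assoc, ih, ← mul_assoc, ← bs_rel, mul_assoc, ← pow_add]
      congr 2
      ring

lemma pow_b_mul_a (hd : 0 < d) (n : ℕ) :
    b c d ^ n * a c d = b c d ^ (n % d) * (a c d * b c d ^ (c * (n / d))) := by
  conv_lhs => rw [(Nat.mod_add_div n d).symm, pow_add, mul_assoc,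
    pow_d_mul_a]

lemma stem_mul_a (hd : 0 < d) (l : List (Fin d)) (t : ℕ) :
    wordStem c d l * b c d ^ t * a c d =
      wordStem c d (l ++ [⟨t % d, Nat.mod_lt _ hd⟩]) * b c d ^ (c * (t / d)) := by
  rw [wordStem_append, mul_assoc, pow_b_mul_a c d hd]
  simp [wordStem, mul_assoc]

lemma mul_nf (hd : 0 < d) :
    ∀ (l2 : List (Fin d)) (t2 t1 : ℕ) (l1 : List (Fin d)),
      ∃ l t, (wordStem c d l1 * b c d ^ t1) * (wordStem c d l2 * b c d ^ t2) =
        wordStem c d l * b c d ^ t := by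
  intro l2
  induction l2 with
  | nil =>
      intro t2 t1 l1
      exact ⟨l1, t1 + t2, by rw [wordStem]; simp [pow_add, mul_assoc]⟩
  | cons s l2 ih =>
      intro t2 t1 l1
      obtain ⟨l, t, hlt⟩ := ih t2 (c * ((t1 + (s : ℕ)) / d))
        (l1 ++ [⟨(t1 + (s : ℕ)) % d, Nat.mod_lt _ hd⟩])
      refine ⟨l, t, ?_⟩
      rw [← hlt]
      rw [← stem_mul_a c d hd l1 (t1 + (s : ℕ))]
      rw [wordStem]
      have : wordStem c d l1 * b c d ^ t1 * (b c d ^ (s : ℕ) * a c d * wordStem c d l2 * b c d ^ t2)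
          = (wordStem c d l1 * (b c d ^ t1 * b c d ^ (s : ℕ)) * a c d) *
            (wordStem c d l2 * b c d ^ t2) := by
        simp [mul_assoc]
      rw [this, ← pow_add, mul_assoc (wordStem c d l1)]

lemma nf_exists (hd : 0 < d) {x : Grp c d} (hx : x ∈ P c d) :
    ∃ (l : List (Fin d)) (t : ℕ), x = wordStem c d l * b c d ^ t := by
  induction hx using Submonoid.closure_induction with
  | mem g hg =>
      rcases hg with rfl | rfl
      · exact ⟨[⟨0, hd⟩], 0, by simp [wordStem]⟩
      · exact ⟨[], 1, by simp [wordStem]⟩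
  | one => exact ⟨[], 0, by simp [wordStem]⟩
  | mul g h _ _ ihg ihh =>
      obtain ⟨l1, t1, rfl⟩ := ihg
      obtain ⟨l2, t2, rfl⟩ := ihh
      obtain ⟨l, t, hlt⟩ := mul_nf c d hd l2 t2 t1 l1
      exact ⟨l, t, hlt⟩

lemma theta_nf (θ : Grp c d →* Multiplicative ℤ)
    (hθa : θ (a c d) = Multiplicative.ofAdd 1) (hθb : θ (b c d) = 1)
    (l : List (Fin d)) (t : ℕ) :
    θ (wordStem c d l * b c d ^ t) = Multiplicative.ofAdd (l.length : ℤ) := by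
  rw [map_mul, map_pow, hθb, one_pow, mul_one]
  induction l with
  | nil => simp [wordStem]
  | cons s l ih =>
      rw [wordStem, map_mul, map_mul, map_pow, hθb, one_pow, one_mul, hθa, ih]
      rw [← ofAdd_add]
      congr 1
      simp
      ring

lemma b_pow_eq_one (hc : 0 < c) (hd : 0 < d) {n : ℕ} (h : b c d ^ n = 1) : n = 0 := by
  have h2 := congrArg (ψ c d hc hd) h
  rw [map_pow, ψ_b, β_pow, map_one] at h2
  have h4 : Multiplicative.ofAdd (n : ℤ) = (1 : G₀) := by
    apply HNNExtension.of_injective (φiso c d hc hd)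
    rw [h2, map_one]
  have h5 : (n : ℤ) = 0 := by simpa using congrArg Multiplicative.toAdd h4
  exact_mod_cast h5

/-- antisymmetry -/
lemma bs_antisymm (hc : 0 < c) (hd : 0 < d)
    (θ : Grp c d →* Multiplicative ℤ)
    (hθa : θ (a c d) = Multiplicative.ofAdd 1) (hθb : θ (b c d) = 1)
    {g h : Grp c d} (h1 : bsLe c d g h) (h2 : bsLe c d h g) : g = h := by
  obtain ⟨l1, t1, he1⟩ := nf_exists c d hd h1
  obtain ⟨l2, t2, he2⟩ := nf_exists c d hd h2
  have hinv : (g⁻¹ * h)⁻¹ = h⁻¹ * g := by group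
  have hth : θ (g⁻¹ * h) * θ (h⁻¹ * g) = 1 := by
    rw [← map_mul]
    have : g⁻¹ * h * (h⁻¹ * g) = 1 := by group
    rw [this, map_one]
  rw [he1, he2, theta_nf c d θ hθa hθb, theta_nf c d θ hθa hθb, ← ofAdd_add] at hth
  have hlen : (l1.length : ℤ) + (l2.length : ℤ) = 0 := by
    simpa using congrArg Multiplicative.toAdd hth
  have hl1 : l1 = [] := by
    have : l1.length = 0 := by omega
    exact List.length_eq_zero_iff.1 this
  have hl2 : l2 = [] := by
    have : l2.length = 0 := by omega
    exact List.length_eq_zero_iff.1 this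
  subst hl1; subst hl2
  rw [wordStem, one_mul] at he1 he2
  have hprod : b c d ^ (t1 + t2) = 1 := by
    rw [pow_add, ← he1, ← he2]
    group
  have := b_pow_eq_one c d hc hd hprod
  have ht1 : t1 = 0 := by omega
  have : g⁻¹ * h = 1 := by rw [he1, ht1, pow_zero]
  have := mul_eq_one_iff_inv_eq.1 this
  simp at this
  exact this

lemma bsLe_refl (w : Grp c d) : bsLe c d w w := by
  show w⁻¹ * w ∈ P c d
  rw [inv_mul_cancel]
  exact one_mem _

lemma b_mem_P' : b c d ∈ P c d := Submonoid.subset_closure (Set.mem_insert_of_mem _ rfl)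


/-- If x, y ∈ P have a common upper bound in P and z ∈ P is a least upper bound of
x and y, and if θ(x) = θ(y), then there is t ∈ ℕ such that either z = x and x = y·b^t,
or z = y and y = x·b^t. -/
theorem statement5 (c d : ℕ) (hc : 0 < c) (hd : 0 < d)
    (θ : Grp c d →* Multiplicative ℤ)
    (hθa : θ (a c d) = Multiplicative.ofAdd 1) (hθb : θ (b c d) = 1)
    (x y z : Grp c d) (hx : x ∈ P c d) (hy : y ∈ P c d) (hz : z ∈ P c d)
    (hub : ∃ w ∈ P c d, bsLe c d x w ∧ bsLe c d y w)
    (hxz : bsLe c d x z) (hyz : bsLe c d y z)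
    (hlub : ∀ w ∈ P c d, bsLe c d x w → bsLe c d y w → bsLe c d z w)
    (hθ : θ x = θ y) :
    ∃ t : ℕ, (z = x ∧ x = y * b c d ^ t) ∨ (z = y ∧ y = x * b c d ^ t) := by
  obtain ⟨lx, ux, hxe⟩ := nf_exists c d hd hx
  obtain ⟨ly, uy, hye⟩ := nf_exists c d hd hy
  have hxzP : x⁻¹ * z ∈ P c d := hxz
  have hyzP : y⁻¹ * z ∈ P c d := hyz
  obtain ⟨m1, s1, hm1⟩ := nf_exists c d hd
    (mul_mem (pow_mem (b_mem_P' c d) ux) hxzP)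
  obtain ⟨m2, s2, hm2⟩ := nf_exists c d hd
    (mul_mem (pow_mem (b_mem_P' c d) uy) hyzP)
  have hz1 : z = wordStem c d (lx ++ m1) * b c d ^ s1 := by
    have h0 : z = wordStem c d lx * (b c d ^ ux * (x⁻¹ * z)) := by
      rw [← mul_assoc, ← hxe]
      group
    rw [hm1, ← mul_assoc, ← wordStem_append] at h0
    exact h0
  have hz2 : z = wordStem c d (ly ++ m2) * b c d ^ s2 := by
    have h0 : z = wordStem c d ly * (b c d ^ uy * (y⁻¹ * z)) := by
      rw [← mul_assoc, ← hye]
      group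
    rw [hm2, ← mul_assoc, ← wordStem_append] at h0
    exact h0
  have hkey := nf_unique c d hc hd _ _ _ _ (hz1.symm.trans hz2)
  have hlen : lx.length = ly.length := by
    have h1 : θ x = Multiplicative.ofAdd (lx.length : ℤ) := by
      rw [hxe, theta_nf c d θ hθa hθb]
    have h2 : θ y = Multiplicative.ofAdd (ly.length : ℤ) := by
      rw [hye, theta_nf c d θ hθa hθb]
    have h3 : ((lx.length : ℤ)) = (ly.length : ℤ) := by
      have := h1.symm.trans (hθ.trans h2)
      simpa using congrArg Multiplicative.toAdd this
    exact_mod_cast h3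
  have hlxy : lx = ly := List.append_inj_left hkey.1 hlen
  rw [← hlxy] at hye
  rcases le_total ux uy with hle | hle
  · -- x ≤ y
    refine ⟨uy - ux, Or.inr ?_⟩
    have hyx : y = x * b c d ^ (uy - ux) := by
      rw [hxe, hye, mul_assoc, ← pow_add]
      congr 2
      omega
    have hxyle : bsLe c d x y := by
      show x⁻¹ * y ∈ P c d
      rw [hyx, inv_mul_cancel_left]
      exact pow_mem (b_mem_P' c d) _
    have hzy : bsLe c d z y := hlub y hy hxyle (bsLe_refl c d y)
    exact ⟨bs_antisymm c d hc hd θ hθa hθb hzy hyz, hyx⟩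
  · -- y ≤ x
    refine ⟨ux - uy, Or.inl ?_⟩
    have hxy : x = y * b c d ^ (ux - uy) := by
      rw [hxe, hye, mul_assoc, ← pow_add]
      congr 2
      omega
    have hyxle : bsLe c d y x := by
      show y⁻¹ * x ∈ P c d
      rw [hxy, inv_mul_cancel_left]
      exact pow_mem (b_mem_P' c d) _
    have hzx : bsLe c d z x := hlub x hx (bsLe_refl c d x) hyxle
    exact ⟨bs_antisymm c d hc hd θ hθa hθb hzx hxz, hxy⟩


end BSpaper
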